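/- arXiv:1802.04613 — 4 statements merged into one kernel-verified Lean document; each statement's English description precedes it below -/
import Mathlib

section
/- Let V be a finite type and let H₀ ⊆ H₁ ⊆ H₂ ⊆ ⋯ be a transitive–fraternal augmentation sequence of digraphs on V. Let u ∈ V, let S = {v ∈ V : (v,u) is an edge of H₀} be the set of in-neighbors of u in H₀, and let m = |S|. Then there exists a list s₁, s₂, …, s_m enumerating the elements of S without repetition such that for all indices i < j, (s_i, s_j) is an edge of H_m. -/
/-- Inserting an element into a chain of a "tournament-like" relation. -/
lemma insert_chain {V : Type*} (R : V → V → Prop) (a : V) :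
    ∀ l : List V, l.Chain' R → (∀ x ∈ l, R a x ∨ R x a) →
      ∃ l₁ l₂, l = l₁ ++ l₂ ∧ (l₁ ++ a :: l₂).Chain' R := by
  intro l
  induction l with
  | nil => intro _ _; exact ⟨[], [], rfl, List.isChain_singleton a⟩
  | cons b t ih =>
    intro hc ht
    rcases ht b (by simp) with hab | hba
    · exact ⟨[], b :: t, rfl, hc.cons (by simpa using hab)⟩
    · obtain ⟨t₁, t₂, heq, hch⟩ := ih hc.tail (fun x hx => ht x (by simp [hx]))
      refine ⟨b :: t₁, t₂, by simp [heq], ?_⟩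
      cases t₁ with
      | nil => exact hch.cons (by simpa using hba)
      | cons c t₁' =>
        refine hch.cons ?_
        have : t = c :: (t₁' ++ t₂) := by simpa using heq
        rw [this] at hc
        exact (by simpa using (List.isChain_cons_cons.mp hc).1)

/-- Any finite "tournament" list can be permuted into a chain. -/
lemma tournament_chain {V : Type*} (R : V → V → Prop) :
    ∀ l : List V, (∀ x ∈ l, ∀ y ∈ l, x ≠ y → R x y ∨ R y x) → l.Nodup →
      ∃ l' : List V, l'.Perm l ∧ l'.Chain' R := by
  intro l
  induction l with
  | nil => exact fun _ _ => ⟨[], List.Perm.refl _, List.isChain_nil⟩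
  | cons a t ih =>
    intro htour hnd
    obtain ⟨t', hperm, hch⟩ := ih
      (fun x hx y hy => htour x (by simp [hx]) y (by simp [hy])) hnd.of_cons
    have ha : ∀ x ∈ t', R a x ∨ R x a := by
      intro x hx
      have hxt : x ∈ t := hperm.mem_iff.mp hx
      have : a ≠ x := fun h => (List.nodup_cons.mp hnd).1 (h ▸ hxt)
      exact htour a (by simp) x (by simp [hxt]) this
    obtain ⟨l₁, l₂, heq, hch'⟩ := insert_chain R a t' hch ha
    refine ⟨l₁ ++ a :: l₂, ?_, hch'⟩
    refine List.perm_middle.trans ?_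
    rw [← heq]
    exact hperm.cons a

/-- Lemma 3.2 of the paper: in a transitive–fraternal augmentation sequence
`H 0 ⊆ H 1 ⊆ ⋯` of digraphs on a finite vertex set, the set `S` of in-neighbors
of a vertex `u` in `H 0` can be enumerated without repetition as `s₁, …, s_m`
(with `m = |S|`) so that `(s_i, s_j)` is an edge of `H m` whenever `i < j`. -/
theorem stmt_2 {V : Type*} [Fintype V] (H : ℕ → V → V → Prop)
    (hirr : ∀ i x, ¬ H i x x)
    (hmono : ∀ i x y, H i x y → H (i + 1) x y)
    (htrans : ∀ i x y z, H i x y → H i y z → x ≠ z → H (i + 1) x z)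
    (hfrat : ∀ i x y z, x ≠ y → H i x z → H i y z → H (i + 1) x y ∨ H (i + 1) y x)
    (u : V) :
    ∃ l : List V, l.Nodup ∧ (∀ v, v ∈ l ↔ H 0 v u) ∧
      ∀ i j : Fin l.length, (i : ℕ) < (j : ℕ) → H l.length (l.get i) (l.get j) := by
  classical
  have hmonoLe : ∀ {k n : ℕ}, k ≤ n → ∀ x y, H k x y → H n x y := by
    intro k n hkn
    induction n, hkn using Nat.le_induction with
    | base => exact fun x y h => h
    | succ n hkn ih => exact fun x y h => hmono n x y (ih x y h)
  set S : Finset V := Finset.univ.filter (fun v => H 0 v u) with hS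
  have hmemS : ∀ v, v ∈ S ↔ H 0 v u := by intro v; simp [hS]
  obtain ⟨l, hperm, hch⟩ := tournament_chain (H 1) S.toList
    (fun x hx y hy hxy => hfrat 0 x y u hxy
      ((hmemS x).mp (by simpa using hx)) ((hmemS y).mp (by simpa using hy)))
    S.nodup_toList
  have hnd : l.Nodup := hperm.nodup_iff.mpr S.nodup_toList
  have hmem : ∀ v, v ∈ l ↔ H 0 v u := by
    intro v
    rw [hperm.mem_iff, Finset.mem_toList, hmemS]
  refine ⟨l, hnd, hmem, ?_⟩
  -- chain gives consecutive edges
  have hstep' := List.isChain_iff_getElem.mp hch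
  have hstep : ∀ i : ℕ, ∀ h : i + 1 < l.length,
      H 1 (l.get ⟨i, Nat.lt_of_succ_lt h⟩) (l.get ⟨i + 1, h⟩) := by
    intro i h
    exact hstep' i (by omega)
  have key : ∀ d : ℕ, 0 < d → ∀ i : ℕ, ∀ h : i + d < l.length,
      H d (l.get ⟨i, by omega⟩) (l.get ⟨i + d, h⟩) := by
    intro d
    induction d with
    | zero => omega
    | succ d ih =>
      intro _ i h
      rcases Nat.eq_zero_or_pos d with hd0 | hd0
      · subst hd0; exact hstep i h
      · have h1 : i + d < l.length := by omega
        have hHd : H d (l.get ⟨i, by omega⟩) (l.get ⟨i + d, h1⟩) := ih hd0 i h1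
        have hH1 : H 1 (l.get ⟨i + d, h1⟩) (l.get ⟨i + d + 1, by omega⟩) := hstep (i + d) (by omega)
        have hne : l.get ⟨i, by omega⟩ ≠ l.get ⟨i + d + 1, by omega⟩ := by
          intro hcontra
          have := hnd.get_inj_iff.mp hcontra
          simp at this; omega
        have := htrans d _ _ _ hHd (hmonoLe hd0 _ _ hH1) hne
        have hidx : i + d + 1 = i + (d + 1) := by omega
        simp_rw [hidx] at this
        exact this
  intro i j hij
  have hd : 0 < (j : ℕ) - i ∧ (i : ℕ) + ((j : ℕ) - i) < l.length := by
    have := j.isLt; omega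
  have := key ((j : ℕ) - i) hd.1 i hd.2
  have hji : (i : ℕ) + ((j : ℕ) - i) = j := by omega
  have hle : (j : ℕ) - i ≤ l.length := by have := j.isLt; omega
  have h2 := hmonoLe hle _ _ this
  convert h2 using 2 <;> simp [hji]
end

section
/- Let V be a type and let H₀ ⊆ H₁ ⊆ H₂ ⊆ ⋯ be a sequence of digraphs on V such that for every i ≥ 0 and all vertices x, y, z: if (x,y) and (y,z) are edges of H_i and x ≠ z, then (x,z) is an edge of H_{i+1}. Then for every i ≥ 0 and all distinct vertices u, v: if there is a directed walk in H₀ from u to v of length ℓ with 1 ≤ ℓ ≤ 2^i, then (u,v) is an edge of H_i. -/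
/-- Under iterated transitive augmentation, a directed walk of length `ℓ` with
`1 ≤ ℓ ≤ 2^i` in `H 0` between distinct vertices becomes a single edge of `H i`. -/
theorem stmt_3 {V : Type*} (H : ℕ → V → V → Prop)
    (hirr : ∀ i x, ¬ H i x x)
    (hmono : ∀ i x y, H i x y → H (i + 1) x y)
    (htrans : ∀ i x y z, H i x y → H i y z → x ≠ z → H (i + 1) x z)
    (i : ℕ) (u v : V) (huv : u ≠ v)
    (ℓ : ℕ) (hℓ1 : 1 ≤ ℓ) (hℓ2 : ℓ ≤ 2 ^ i)
    (w : ℕ → V) (hw0 : w 0 = u) (hwℓ : w ℓ = v)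
    (hstep : ∀ j < ℓ, H 0 (w j) (w (j + 1))) :
    H i u v := by
  induction i generalizing u v ℓ w with
  | zero =>
    interval_cases ℓ
    have := hstep 0 (by norm_num)
    rwa [hw0, hwℓ] at this
  | succ i ih =>
    by_cases hle : ℓ ≤ 2 ^ i
    · exact hmono _ _ _ (ih u v huv ℓ hℓ1 hle w hw0 hwℓ hstep)
    · push_neg at hle
      set k := ℓ - 2 ^ i with hk
      have hk1 : 1 ≤ k := by omega
      have hk2 : k ≤ 2 ^ i := by
        have : 2 ^ (i + 1) = 2 ^ i + 2 ^ i := by ring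
        omega
      have hkℓ : k + 2 ^ i = ℓ := by omega
      set x := w k with hx
      have hfirst : ∀ hux : u ≠ x, H i u x :=
        fun hux => ih u x hux k hk1 hk2 w hw0 rfl
          (fun j hj => hstep j (by omega))
      have hsecond : ∀ hxv : x ≠ v, H i x v :=
        fun hxv => ih x v hxv (2 ^ i) (Nat.one_le_two_pow) le_rfl
          (fun j => w (k + j)) rfl (by show w (k + 2 ^ i) = v; rw [hkℓ]; exact hwℓ)
          (fun j hj => by
            have := hstep (k + j) (by omega)
            rwa [Nat.add_assoc] at this)
      by_cases hux : u = x
      · exact hmono _ _ _ (hux ▸ hsecond (hux ▸ huv))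
      · by_cases hxv : x = v
        · exact hmono _ _ _ (hxv ▸ hfirst hux)
        · exact htrans _ _ _ _ (hfirst hux) (hsecond hxv) huv
end

section
/- Let G be a finite simple graph of maximum degree at most d, where d ≥ 2, with vertex set V. Let H₀ be a digraph on V every edge of which is an orientation of an edge of G, and let H₀ ⊆ H₁ ⊆ H₂ ⊆ ⋯ be a strict transitive–fraternal augmentation sequence of digraphs on V. Then for every i ≥ 0 and every vertex v, the in-degree of v in H_i, that is the number of vertices u with (u,v) an edge of H_i, is at most d^{2^i}. -/
/-- The class of graphs of maximum degree at most `d` has bounded expansion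
witnessed by `Γ(i) = d^{2^i}`: in any strict transitive–fraternal augmentation
sequence starting from an orientation of (a subgraph of) `G`, every vertex of
the `i`-th augmentation has in-degree at most `d ^ (2 ^ i)`. -/
theorem stmt_6 {V : Type*} [Fintype V] (G : SimpleGraph V) [DecidableRel G.Adj]
    (d : ℕ) (hd : 2 ≤ d) (hdeg : ∀ w, G.degree w ≤ d)
    (H : ℕ → V → V → Prop)
    (hirr : ∀ i x, ¬ H i x x)
    (hmono : ∀ i x y, H i x y → H (i + 1) x y)
    (hH0 : ∀ x y, H 0 x y → G.Adj x y)
    (hstrict : ∀ i x y, H (i + 1) x y →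
      H i x y ∨ (∃ z, H i x z ∧ H i z y) ∨ (∃ z, H i x z ∧ H i y z))
    (i : ℕ) (v : V) :
    {u | H i u v}.ncard ≤ d ^ (2 ^ i) := by
  classical
  -- Nf i v : all (in- or out-) neighbors of v in H i
  let Nf : ℕ → V → Finset V := fun i v => Finset.univ.filter (fun u => H i u v ∨ H i v u)
  have hmem : ∀ i u v, u ∈ Nf i v ↔ (H i u v ∨ H i v u) := by
    intro i u v; simp [Nf]
  have key : ∀ i v, (Nf i v).card ≤ d ^ (2 ^ i) := by
    intro i
    induction i with
    | zero =>
      intro v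
      have hsub : Nf 0 v ⊆ G.neighborFinset v := by
        intro u hu
        rw [hmem] at hu
        rw [SimpleGraph.mem_neighborFinset]
        rcases hu with h | h
        · exact (hH0 u v h).symm
        · exact hH0 v u h
      calc (Nf 0 v).card ≤ (G.neighborFinset v).card := Finset.card_le_card hsub
        _ = G.degree v := rfl
        _ ≤ d := hdeg v
        _ = d ^ (2 ^ 0) := by norm_num
    | succ i ih =>
      intro v
      have hsub : Nf (i+1) v ⊆ Nf i v ∪ (Nf i v).biUnion (fun z => Nf i z \ {v}) := by
        intro u hu
        rw [hmem] at hu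
        have huv : u ≠ v := by
          rintro rfl
          rcases hu with h | h <;> exact hirr _ _ h
        have main : (H i u v ∨ H i v u) ∨
            ∃ z, (H i z v ∨ H i v z) ∧ (H i u z ∨ H i z u) := by
          rcases hu with h | h
          · rcases hstrict i u v h with h1 | ⟨z, hz1, hz2⟩ | ⟨z, hz1, hz2⟩
            · exact Or.inl (Or.inl h1)
            · exact Or.inr ⟨z, Or.inl hz2, Or.inl hz1⟩
            · exact Or.inr ⟨z, Or.inr hz2, Or.inl hz1⟩
          · rcases hstrict i v u h with h1 | ⟨z, hz1, hz2⟩ | ⟨z, hz1, hz2⟩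
            · exact Or.inl (Or.inr h1)
            · exact Or.inr ⟨z, Or.inr hz1, Or.inr hz2⟩
            · exact Or.inr ⟨z, Or.inr hz1, Or.inl hz2⟩
        rcases main with h | ⟨z, hz, hu'⟩
        · exact Finset.mem_union_left _ ((hmem i u v).2 h)
        · apply Finset.mem_union_right
          refine Finset.mem_biUnion.2 ⟨z, (hmem i z v).2 hz, ?_⟩
          rw [Finset.mem_sdiff, Finset.mem_singleton]
          exact ⟨(hmem i u z).2 hu', huv⟩
      have hvz : ∀ z ∈ Nf i v, (Nf i z \ {v}).card ≤ d ^ (2 ^ i) - 1 := by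
        intro z hz
        have hv : v ∈ Nf i z := by
          rw [hmem] at hz ⊢; tauto
        have hcard : (Nf i z \ {v}).card = (Nf i z).card - 1 := by
          rw [Finset.card_sdiff_of_subset (by simpa using hv)]; simp
        rw [hcard]
        exact Nat.sub_le_sub_right (ih z) 1
      have hb : ((Nf i v).biUnion (fun z => Nf i z \ {v})).card
          ≤ (Nf i v).card * (d ^ (2 ^ i) - 1) := by
        calc ((Nf i v).biUnion (fun z => Nf i z \ {v})).card
            ≤ ∑ z ∈ Nf i v, (Nf i z \ {v}).card := Finset.card_biUnion_le
          _ ≤ ∑ _z ∈ Nf i v, (d ^ (2 ^ i) - 1) := Finset.sum_le_sum hvz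
          _ = (Nf i v).card * (d ^ (2 ^ i) - 1) := by
              rw [Finset.sum_const, smul_eq_mul]
      have harith : d ^ (2 ^ i) + d ^ (2 ^ i) * (d ^ (2 ^ i) - 1)
          = d ^ (2 ^ (i+1)) := by
        obtain ⟨k, hk⟩ : ∃ k, d ^ (2 ^ i) = k + 1 :=
          ⟨d ^ (2 ^ i) - 1, by
            have : 1 ≤ d ^ (2 ^ i) := Nat.one_le_pow _ _ (by omega)
            omega⟩
        have h2 : (2 : ℕ) ^ (i+1) = 2 ^ i + 2 ^ i := by rw [pow_succ]; ring
        rw [h2, pow_add, hk]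
        simp [Nat.add_sub_cancel]
        ring
      calc (Nf (i+1) v).card
          ≤ (Nf i v ∪ (Nf i v).biUnion (fun z => Nf i z \ {v})).card :=
            Finset.card_le_card hsub
        _ ≤ (Nf i v).card + ((Nf i v).biUnion (fun z => Nf i z \ {v})).card :=
            Finset.card_union_le _ _
        _ ≤ (Nf i v).card + (Nf i v).card * (d ^ (2 ^ i) - 1) :=
            Nat.add_le_add_left hb _
        _ ≤ d ^ (2 ^ i) + d ^ (2 ^ i) * (d ^ (2 ^ i) - 1) := by
            have := ih v
            exact Nat.add_le_add this (Nat.mul_le_mul_right _ this)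
        _ = d ^ (2 ^ (i+1)) := harith
  have hsub : {u | H i u v} ⊆ (↑(Nf i v) : Set V) := by
    intro u hu
    simpa using (hmem i u v).2 (Or.inl hu)
  calc {u | H i u v}.ncard ≤ (↑(Nf i v) : Set V).ncard :=
        Set.ncard_le_ncard hsub (Set.toFinite _)
    _ = (Nf i v).card := Set.ncard_coe_finset _
    _ ≤ d ^ (2 ^ i) := key i v
end

section
/- Let G be a finite simple graph that admits some digraph H₀ on its vertices orienting every edge of G (for every edge {u,v} of G, (u,v) or (v,u) is an edge of H₀; every edge of H₀ comes from an edge of G) in which every vertex has in-degree at most k. Then G admits a digraph H on its vertices in which every edge {u,v} of G receives exactly one of the orientations (u,v), (v,u), every edge of H comes from an edge of G, and every vertex has in-degree at most 2k. -/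
/-- If a finite simple graph admits some orientation (each edge receiving at
least one direction) with in-degree at most `k`, then it admits an orientation
choosing exactly one direction for each edge with in-degree at most `2k`. -/
theorem stmt_9 {V : Type*} [Fintype V] (G : SimpleGraph V) (k : ℕ)
    (H₀ : V → V → Prop)
    (h0orient : ∀ u v, G.Adj u v → H₀ u v ∨ H₀ v u)
    (h0sub : ∀ u v, H₀ u v → G.Adj u v)
    (h0indeg : ∀ v, {u | H₀ u v}.ncard ≤ k) :
    ∃ H : V → V → Prop,
      (∀ u v, G.Adj u v → (H u v ∧ ¬ H v u) ∨ (H v u ∧ ¬ H u v)) ∧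
      (∀ u v, H u v → G.Adj u v) ∧
      (∀ v, {u | H u v}.ncard ≤ 2 * k) := by
  classical
  obtain ⟨n, e⟩ : ∃ n, Nonempty (V ≃ Fin n) := ⟨_, ⟨Fintype.equivFin V⟩⟩
  obtain ⟨e⟩ := e
  refine ⟨fun u v => G.Adj u v ∧ H₀ u v ∧ (H₀ v u → e u < e v), ?_, ?_, ?_⟩
  · intro u v hadj
    have hne : e u ≠ e v := fun h => hadj.ne (e.injective h)
    rcases h0orient u v hadj with h | h
    · by_cases h' : H₀ v u
      · rcases lt_or_gt_of_ne hne with hlt | hlt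
        · exact Or.inl ⟨⟨hadj, h, fun _ => hlt⟩, fun ⟨_, _, hc⟩ => absurd (hc h) (not_lt.2 hlt.le)⟩
        · exact Or.inr ⟨⟨hadj.symm, h', fun _ => hlt⟩, fun ⟨_, _, hc⟩ => absurd (hc h') (not_lt.2 hlt.le)⟩
      · exact Or.inl ⟨⟨hadj, h, fun hv => absurd hv h'⟩, fun ⟨_, hv, _⟩ => h' hv⟩
    · by_cases h' : H₀ u v
      · rcases lt_or_gt_of_ne hne with hlt | hlt
        · exact Or.inl ⟨⟨hadj, h', fun _ => hlt⟩, fun ⟨_, _, hc⟩ => absurd (hc h') (not_lt.2 hlt.le)⟩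
        · exact Or.inr ⟨⟨hadj.symm, h, fun _ => hlt⟩, fun ⟨_, _, hc⟩ => absurd (hc h) (not_lt.2 hlt.le)⟩
      · exact Or.inr ⟨⟨hadj.symm, h, fun hv => absurd hv h'⟩, fun ⟨_, hv, _⟩ => h' hv⟩
  · intro u v h; exact h.1
  · intro v
    calc {u | G.Adj u v ∧ H₀ u v ∧ (H₀ v u → e u < e v)}.ncard
        ≤ {u | H₀ u v}.ncard :=
          Set.ncard_le_ncard (fun u hu => hu.2.1) (Set.toFinite _)
      _ ≤ k := h0indeg v
      _ ≤ 2 * k := by omega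
end
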